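/- Let d ≥ 1 and let F = {F_i}_{i=1}^{d²} be a Wigner basis for d×d complex matrices with weights f_i = tr F_i. Define the shifted family F^S by F^S_i := −F_i + (2f_i/d)·I. Then F^S is again a Wigner basis and tr F^S_i = f_i for all i. -/

import Mathlib

open Matrix BigOperators
open scoped ComplexOrder Kronecker

/-- A measure basis: a linearly independent family of `d²` Hermitian `d×d` complex
matrices summing to the identity, with nonnegative traces. -/
def IsMeasureBasis {d : ℕ} (L : Fin (d ^ 2) → Matrix (Fin d) (Fin d) ℂ) : Prop :=
  (∀ i, (L i).IsHermitian) ∧ LinearIndependent ℝ L ∧ (∑ i, L i) = 1 ∧ ∀ i, 0 ≤ ((L i).trace).re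

/-- A Wigner basis: an orthogonal measure basis. -/
def IsWignerBasis {d : ℕ} (L : Fin (d ^ 2) → Matrix (Fin d) (Fin d) ℂ) : Prop :=
  IsMeasureBasis L ∧ ∀ i j, i ≠ j → (L i * L j).trace = 0

/-- The rescaled frame operator `S_L(X) = ∑ⱼ (tr(X Lⱼ)/lⱼ) Lⱼ`. -/
noncomputable def rsFrameOp {n : Type*} [Fintype n] {m : Type*} [Fintype m] [DecidableEq m]
    (L : n → Matrix m m ℂ) (X : Matrix m m ℂ) : Matrix m m ℂ :=
  ∑ j, (((X * L j).trace) / ((L j).trace)) • L j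

/-- A map on matrices that is ℝ-linear, Hermiticity-preserving, self-adjoint with respect to
the Hilbert–Schmidt inner product on Hermitian matrices, and positive. -/
def IsPosSelfAdjMap {m : Type*} [Fintype m]
    (T : Matrix m m ℂ → Matrix m m ℂ) : Prop :=
  IsLinearMap ℝ T ∧ (∀ X, X.IsHermitian → (T X).IsHermitian) ∧
  (∀ X Y, X.IsHermitian → Y.IsHermitian → (T X * Y).trace = (X * T Y).trace) ∧
  (∀ X, X.IsHermitian → 0 ≤ ((X * T X).trace).re)

/-- `T` is the (unique) positive self-adjoint inverse square root of the rescaled frame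
operator of `L`, i.e. `S_L ∘ T ∘ T = id` on Hermitian matrices; `PW(L) i = T (L i)`. -/
def IsInvSqrtOfFrameOp {n : Type*} [Fintype n] {m : Type*} [Fintype m] [DecidableEq m]
    (L : n → Matrix m m ℂ) (T : Matrix m m ℂ → Matrix m m ℂ) : Prop :=
  IsPosSelfAdjMap T ∧ ∀ X : Matrix m m ℂ, X.IsHermitian → rsFrameOp L (T (T X)) = X

/-- the shifted family `Fᔆᵢ = −Fᵢ + (2fᵢ/d)·I` of a Wigner basis is again a
Wigner basis with the same weights. -/
theorem shifted_wigner_basis {d : ℕ} [NeZero d]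
    (F : Fin (d ^ 2) → Matrix (Fin d) (Fin d) ℂ) (hF : IsWignerBasis F)
    (FS : Fin (d ^ 2) → Matrix (Fin d) (Fin d) ℂ)
    (hFS : ∀ i, FS i = -F i +
      ((2 * ((F i).trace).re / (d : ℝ)) • (1 : Matrix (Fin d) (Fin d) ℂ))) :
    IsWignerBasis FS ∧ ∀ i, (FS i).trace = (F i).trace := by
  obtain ⟨⟨hHerm, hLI, hSum, hPos⟩, hOrth⟩ := hF
  have hd : (d:ℝ) ≠ 0 := Nat.cast_ne_zero.mpr (NeZero.ne d)
  set f : Fin (d^2) → ℝ := fun i => ((F i).trace).re with hf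
  have htr : ∀ i, (F i).trace = (f i : ℂ) := by
    intro i
    have h1 : ((F i)ᴴ).trace = star (F i).trace := Matrix.trace_conjTranspose _
    rw [(hHerm i).eq] at h1
    exact ((Complex.conj_eq_iff_re.mp h1.symm)).symm
  have htr1 : (1 : Matrix (Fin d) (Fin d) ℂ).trace = (d:ℂ) := by
    simp [Matrix.trace_one]
  have hsm : ∀ (r:ℝ) (M : Matrix (Fin d) (Fin d) ℂ), r • M = (r:ℂ) • M := by
    intro r M; ext i j; simp [Matrix.smul_apply, Complex.real_smul]
  have hsumf : ∑ i, f i = d := by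
    have : (∑ i, (F i).trace) = (d:ℂ) := by
      rw [← Matrix.trace_sum, hSum, htr1]
    have h2 : ((∑ i, f i : ℝ) : ℂ) = (d:ℂ) := by
      push_cast [← htr]; exact this
    exact_mod_cast h2
  have htrFS : ∀ i, (FS i).trace = (F i).trace := by
    intro i
    rw [hFS i, hsm]
    rw [Matrix.trace_add, Matrix.trace_neg, Matrix.trace_smul, htr1, htr, smul_eq_mul]
    push_cast
    simp only [Complex.ofReal_re]
    have hdC : (d:ℂ) ≠ 0 := Nat.cast_ne_zero.mpr (NeZero.ne d)
    field_simp
    ring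
  refine ⟨⟨⟨?_, ?_, ?_, ?_⟩, ?_⟩, htrFS⟩
  · -- Hermitian
    intro i
    rw [hFS i, hsm]
    refine (hHerm i).neg.add ?_
    show _ᴴ = _
    rw [Matrix.conjTranspose_smul, Matrix.conjTranspose_one, Complex.star_def,
      Complex.conj_ofReal]
  · -- linear independence
    rw [Fintype.linearIndependent_iff]
    intro g hg
    set s : ℝ := ∑ i, g i * f i with hs
    have key : ∑ i, (2 * s / d - g i) • F i = 0 := by
      have e1 : ∑ i, g i • FS i
          = ∑ i, (- (g i) • F i) + (∑ i, (g i * (2 * f i / d))) • (1 : Matrix (Fin d) (Fin d) ℂ) := by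
        rw [Finset.sum_smul, ← Finset.sum_add_distrib]
        refine Finset.sum_congr rfl fun i _ => ?_
        rw [hFS i, smul_add, smul_smul, smul_neg, neg_smul]
      have e2 : (∑ i, (g i * (2 * f i / d))) = 2 * s / d := by
        rw [hs, Finset.mul_sum, Finset.sum_div]
        refine Finset.sum_congr rfl fun i _ => by ring
      rw [e1, e2, ← hSum, Finset.smul_sum, ← Finset.sum_add_distrib] at hg
      calc ∑ i, (2 * s / d - g i) • F i
          = ∑ i, (- (g i) • F i + (2 * s / d) • F i) := by
            refine Finset.sum_congr rfl fun i _ => ?_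
            rw [sub_smul, neg_smul]; abel
        _ = 0 := hg
    have hgi : ∀ i, g i = 2 * s / d := by
      intro i
      have := Fintype.linearIndependent_iff.mp hLI (fun i => 2 * s / d - g i) key i
      linarith [this]
    have hs0 : s = 0 := by
      have h2s : s = 2 * s := by
        conv_lhs => rw [hs]
        calc ∑ i, g i * f i = ∑ i, (2 * s / d) * f i :=
              Finset.sum_congr rfl fun i _ => by rw [hgi i]
          _ = (2 * s / d) * ∑ i, f i := (Finset.mul_sum _ _ _).symm
          _ = 2 * s := by rw [hsumf]; field_simp
      linarith
    intro i
    rw [hgi i, hs0]; simp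
  · -- sum = 1
    have e1 : ∑ i, FS i = -(∑ i, F i) + (∑ i, (2 * f i / d : ℝ)) • (1 : Matrix (Fin d) (Fin d) ℂ) := by
      rw [Finset.sum_smul, ← Finset.sum_neg_distrib, ← Finset.sum_add_distrib]
      exact Finset.sum_congr rfl fun i _ => hFS i
    have e2 : (∑ i, (2 * f i / d : ℝ)) = 2 := by
      have : ∑ i, (2 * f i / d : ℝ) = 2 * (∑ i, f i) / d := by
        rw [Finset.mul_sum, Finset.sum_div]
      rw [this, hsumf]; field_simp
    rw [e1, e2, hSum, hsm]
    push_cast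
    rw [two_smul]
    abel
  · -- traces nonneg
    intro i
    rw [htrFS i]; exact hPos i
  · -- orthogonality
    intro i j hij
    rw [hFS i, hFS j, hsm, hsm]
    simp only [add_mul, mul_add, Matrix.smul_mul, Matrix.mul_smul, neg_mul, mul_neg,
      Matrix.trace_add, Matrix.trace_smul, Matrix.trace_neg, mul_one, one_mul,
      smul_smul, smul_eq_mul, htr1, htr i, htr j, hOrth i j hij, smul_neg]
    have hdC : (d:ℂ) ≠ 0 := Nat.cast_ne_zero.mpr (NeZero.ne d)
    simp only [Complex.ofReal_re]
    push_cast
    field_simp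
    ring
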